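/- Let S = U ++ [b] ++ V be a string in which b does not occur in V and V is nonempty (so the displayed occurrence of b is the last occurrence of b in S, and it is not the last character of S). Then for every string T, the Levenshtein edit distance satisfies lev(S, T ++ [b]) = min( 1 + lev(S, T), |V| + lev(U, T), 1 + lev(S.dropLast, T) ), corresponding respectively to inserting b, to deleting the suffix V and matching b with its last occurrence in S, and to replacing the last character of S by b. -/

import Mathlib

section LevenshteinDefs

variable {α β δ : Type*} [AddZeroClass δ] [Min δ]

namespace Levenshtein

structure Cost (α β δ : Type*) where
  delete : α → δ
  insert : β → δ
  substitute : α → β → δ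

def defaultCost [DecidableEq α] : Cost α α ℕ where
  delete _ := 1
  insert _ := 1
  substitute a b := if a = b then 0 else 1

variable (C : Cost α β δ)

def impl
    (xs : List α) (y : β) (d : {r : List δ // 0 < r.length}) : {r : List δ // 0 < r.length} :=
  let ⟨ds, w⟩ := d
  xs.zip (ds.zip ds.tail) |>.foldr
    (init := ⟨[C.insert y + ds.getLast (List.length_pos_iff.mp w)], by simp⟩)
    (fun ⟨x, d₀, d₁⟩ ⟨r, w⟩ =>
      ⟨min (C.delete x + r[0]) (min (C.insert y + d₀) (C.substitute x y + d₁)) :: r, by simp⟩)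

end Levenshtein

open Levenshtein

variable (C : Cost α β δ)

def suffixLevenshtein (xs : List α) (ys : List β) : {r : List δ // 0 < r.length} :=
  ys.foldr
    (impl C xs)
    (xs.foldr (init := ⟨[0], by simp⟩) (fun a ⟨r, w⟩ => ⟨(C.delete a + r[0]) :: r, by simp⟩))

def levenshtein (xs : List α) (ys : List β) : δ :=
  let ⟨r, w⟩ := suffixLevenshtein C xs ys
  r[0]

end LevenshteinDefs

section LevenshteinAPI

variable {α β δ : Type*} [AddZeroClass δ] [Min δ]

namespace Levenshtein

@[simp] theorem defaultCost_delete [DecidableEq α] (a : α) : (defaultCost : Cost α α ℕ).delete a = 1 := rfl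
@[simp] theorem defaultCost_insert [DecidableEq α] (a : α) : (defaultCost : Cost α α ℕ).insert a = 1 := rfl
@[simp] theorem defaultCost_substitute [DecidableEq α] (a b : α) :
    (defaultCost : Cost α α ℕ).substitute a b = if a = b then 0 else 1 := rfl

end Levenshtein

open Levenshtein

variable (C : Cost α β δ)

theorem impl_length' {xs : List α} {y : β} (d : {r : List δ // 0 < r.length})
    (w : d.1.length = xs.length + 1) :
    (impl C xs y d).1.length = xs.length + 1 := by
  induction xs generalizing d with
  | nil => rfl
  | cons x xs ih =>
    dsimp [impl]
    match d, w with
    | ⟨d₁ :: d₂ :: ds, _⟩, w =>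
      dsimp
      congr 1
      exact ih ⟨d₂ :: ds, (by simp)⟩ (by simpa using w)

theorem suffixLevenshtein_length' (xs : List α) (ys : List β) :
    (suffixLevenshtein C xs ys).1.length = xs.length + 1 := by
  induction ys with
  | nil =>
    dsimp [suffixLevenshtein]
    induction xs with
    | nil => rfl
    | cons _ xs ih =>
      simp_all
  | cons y ys ih =>
    dsimp [suffixLevenshtein]
    rw [impl_length']
    exact ih

theorem suffixLevenshtein_cons₂' (xs : List α) (y ys) :
    suffixLevenshtein C xs (y :: ys) = (impl C xs) y (suffixLevenshtein C xs ys) :=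
  rfl

theorem suffixLevenshtein_cons₁_aux' {x y : {r : List δ // 0 < r.length}}
    (w₀ : x.1[0]'x.2 = y.1[0]'y.2) (w : x.1.tail = y.1.tail) : x = y := by
  match x, y with
  | ⟨hx :: tx, _⟩, ⟨hy :: ty, _⟩ => simp_all

theorem impl_cons' {x : α} {xs : List α} {y : β} {d : δ} {ds : List δ} {w}
    (w' : 0 < List.length ds) :
    impl C (x :: xs) y ⟨d :: ds, w⟩ =
      let ⟨r, w⟩ := impl C xs y ⟨ds, w'⟩
      ⟨min (C.delete x + r[0]) (min (C.insert y + d) (C.substitute x y + ds[0])) :: r, by simp⟩ :=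
  match ds, w' with | _ :: _, _ => rfl

theorem impl_cons_fst_zero' {x : α} {xs : List α} {y : β} {d : δ} {ds : List δ} {w} (h)
    (w' : 0 < List.length ds) :
    (impl C (x :: xs) y ⟨d :: ds, w⟩).1[0]'h =
      let ⟨r, w⟩ := impl C xs y ⟨ds, w'⟩
      min (C.delete x + r[0]) (min (C.insert y + d) (C.substitute x y + ds[0])) :=
  match ds, w' with | _ :: _, _ => rfl

theorem suffixLevenshtein_cons₁' (x : α) (xs ys) :
    suffixLevenshtein C (x :: xs) ys =
      ⟨levenshtein C (x :: xs) ys ::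
        (suffixLevenshtein C xs ys).1, by simp⟩ := by
  induction ys with
  | nil =>
    dsimp [levenshtein, suffixLevenshtein]
    rfl
  | cons y ys ih =>
    apply suffixLevenshtein_cons₁_aux'
    · rfl
    · rw [suffixLevenshtein_cons₂' (xs := x :: xs), ih, impl_cons']
      · rfl
      · simp [suffixLevenshtein_length']

theorem suffixLevenshtein_cons_cons_fst_get_zero'
    (x : α) (xs y ys) (w) :
    (suffixLevenshtein C (x :: xs) (y :: ys)).1[0]'w =
      let ⟨dx, _⟩ := suffixLevenshtein C xs (y :: ys)
      let ⟨dy, _⟩ := suffixLevenshtein C (x :: xs) ys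
      let ⟨dxy, _⟩ := suffixLevenshtein C xs ys
      min
        (C.delete x + dx[0])
        (min
          (C.insert y + dy[0])
          (C.substitute x y + dxy[0])) := by
  conv =>
    lhs
    dsimp only [suffixLevenshtein_cons₂']
  simp only [suffixLevenshtein_cons₁']
  rw [impl_cons_fst_zero']
  rfl

@[simp] theorem levenshtein_nil_nil : levenshtein C [] [] = 0 := by
  simp [levenshtein, suffixLevenshtein]

@[simp] theorem levenshtein_nil_cons (y) (ys) :
    levenshtein C [] (y :: ys) = C.insert y + levenshtein C [] ys := by
  have key : ∀ d : {r : List δ // 0 < r.length}, d.1.length = 1 →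
      (impl C [] y d).1 = [C.insert y + d.1[0]'d.2] := by
    rintro ⟨r, w⟩ h
    rcases r with _ | ⟨a, _ | ⟨b, r⟩⟩
    · simp at h
    · rfl
    · simp at h
  have h2 := key _ (suffixLevenshtein_length' C [] ys)
  have e : ∀ (xs : List α) (ys : List β), levenshtein C xs ys =
      (suffixLevenshtein C xs ys).1[0]'(suffixLevenshtein C xs ys).2 := fun _ _ => rfl
  rw [e, e]
  simp only [suffixLevenshtein_cons₂', h2, List.getElem_cons_zero]

@[simp] theorem levenshtein_cons_nil (x : α) (xs : List α) :
    levenshtein C (x :: xs) [] = C.delete x + levenshtein C xs [] :=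
  rfl

@[simp] theorem levenshtein_cons_cons
    (x : α) (xs : List α) (y : β) (ys : List β) :
    levenshtein C (x :: xs) (y :: ys) =
      min (C.delete x + levenshtein C xs (y :: ys))
        (min (C.insert y + levenshtein C (x :: xs) ys)
          (C.substitute x y + levenshtein C xs ys)) :=
  suffixLevenshtein_cons_cons_fst_get_zero' ..

end LevenshteinAPI

open Levenshtein (defaultCost)

section Aux

variable {α : Type*} [DecidableEq α]

private lemma lev_append_nil' (C : Levenshtein.Cost α α ℕ) (xs : List α) (x : α) :
    levenshtein C (xs ++ [x]) [] = levenshtein C xs [] + C.delete x := by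
  induction xs with
  | nil => simp
  | cons w xs ih => simp [ih]; omega

private lemma lev_nil_append' (C : Levenshtein.Cost α α ℕ) (ys : List α) (y : α) :
    levenshtein C [] (ys ++ [y]) = levenshtein C [] ys + C.insert y := by
  induction ys with
  | nil => simp
  | cons z ys ih => simp [ih]; omega

private lemma lev_append_append' (C : Levenshtein.Cost α α ℕ) (xs ys : List α) (x y : α) :
    levenshtein C (xs ++ [x]) (ys ++ [y]) =
      min (C.delete x + levenshtein C xs (ys ++ [y]))
        (min (C.insert y + levenshtein C (xs ++ [x]) ys)
          (C.substitute x y + levenshtein C xs ys)) := by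
  induction xs generalizing ys with
  | nil =>
    simp only [List.nil_append]
    induction ys with
    | nil => simp
    | cons z ys ih =>
      simp only [List.cons_append, levenshtein_cons_cons, levenshtein_nil_cons,
        lev_nil_append']
      rw [ih]
      simp only [levenshtein_nil_cons, lev_nil_append', ← Nat.add_min_add_left, ← add_assoc]
      ac_rfl
  | cons w xs ih =>
    induction ys with
    | nil =>
      have h0 := ih []
      simp only [List.nil_append] at h0 ⊢
      simp only [List.cons_append, levenshtein_cons_cons, levenshtein_cons_nil,
        lev_append_nil']
      rw [h0]
      simp only [levenshtein_cons_nil, lev_append_nil', ← Nat.add_min_add_left, ← add_assoc]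
      ac_rfl
    | cons z ys ih2 =>
      simp only [List.cons_append, levenshtein_cons_cons]
      rw [(List.cons_append (a := z) (as := ys) (bs := [y])).symm, ih (z :: ys),
        (List.cons_append (a := w) (as := xs) (bs := [x])).symm, ih2, ih ys]
      simp only [List.cons_append, ← Nat.add_min_add_left, ← add_assoc]
      ac_rfl

private lemma lev_concat_le' (xs : List α) (x : α) (ys : List α) :
    levenshtein defaultCost (xs ++ [x]) ys ≤ 1 + levenshtein defaultCost xs ys := by
  rcases List.eq_nil_or_concat ys with rfl | ⟨ys', y, rfl⟩
  · rw [lev_append_nil']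
    simp
  · simp only [List.concat_eq_append]
    rw [lev_append_append']
    simp only [Levenshtein.defaultCost_delete]
    omega

private lemma lev_le_concat' (xs ys : List α) (y : α) :
    levenshtein defaultCost xs ys ≤ 1 + levenshtein defaultCost xs (ys ++ [y]) := by
  rcases List.eq_nil_or_concat ys with rfl | ⟨ys', z, rfl⟩
  · induction xs using List.reverseRecOn with
    | nil => simp
    | append_singleton xs x ih =>
      rw [lev_append_nil', lev_append_append']
      simp only [Levenshtein.defaultCost_delete, Levenshtein.defaultCost_insert,
        Levenshtein.defaultCost_substitute, List.nil_append, lev_append_nil'] at *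
      split_ifs <;> omega
  · simp only [List.concat_eq_append]
    induction xs using List.reverseRecOn with
    | nil =>
      rw [lev_nil_append' defaultCost (ys' ++ [z]) y]
      omega
    | append_singleton xs x ih =>
      have hA := lev_concat_le' xs x (ys' ++ [z])
      rw [lev_append_append' defaultCost xs (ys' ++ [z]) x y]
      simp only [Levenshtein.defaultCost_delete, Levenshtein.defaultCost_insert,
        Levenshtein.defaultCost_substitute] at *
      split_ifs <;> omega

private lemma lev_key (W A T : List α) (b : α) (hb : b ∉ A) :
    levenshtein defaultCost (W ++ [b] ++ A) (T ++ [b]) =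
      min (1 + levenshtein defaultCost (W ++ [b] ++ A) T)
        (min (A.length + levenshtein defaultCost W T)
          (1 + levenshtein defaultCost (W ++ [b] ++ A).dropLast T)) := by
  induction A using List.reverseRecOn with
  | nil =>
    have hB := lev_le_concat' W T b
    rw [List.append_nil, lev_append_append']
    simp only [Levenshtein.defaultCost_delete, Levenshtein.defaultCost_insert,
      Levenshtein.defaultCost_substitute, List.length_nil, zero_add,
      List.dropLast_concat, if_true, eq_self_iff_true, ite_true]
    omega
  | append_singleton A a ih =>
    have hbA : b ∉ A := fun h => hb (List.mem_append_left _ h)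
    have hab : a ≠ b := fun h => hb (by simp [h])
    have hne : W ++ [b] ++ A ≠ [] := by simp
    have h1 := lev_concat_le' ((W ++ [b] ++ A).dropLast) ((W ++ [b] ++ A).getLast hne) T
    rw [List.dropLast_append_getLast hne] at h1
    rw [show W ++ [b] ++ (A ++ [a]) = (W ++ [b] ++ A) ++ [a] by simp,
      lev_append_append', ih hbA]
    simp only [Levenshtein.defaultCost_delete, Levenshtein.defaultCost_insert,
      Levenshtein.defaultCost_substitute, if_neg hab, List.dropLast_concat,
      List.length_append, List.length_singleton]
    omega

end Aux

theorem levenshtein_append_last_occurrence {α : Type*} [DecidableEq α]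
    (U V T : List α) (b : α) (hb : b ∉ V) (hV : V ≠ []) :
    levenshtein Levenshtein.defaultCost (U ++ [b] ++ V) (T ++ [b]) =
      min (1 + levenshtein Levenshtein.defaultCost (U ++ [b] ++ V) T)
        (min (V.length + levenshtein Levenshtein.defaultCost U T)
          (1 + levenshtein Levenshtein.defaultCost (U ++ [b] ++ V).dropLast T)) := by
  exact lev_key U V T b hb
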